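/- arXiv:1001.3749 — 2 statements merged into one kernel-verified Lean document; each statement's English description precedes it below -/
import Mathlib

section
/- Let G be a directed graph on a finite vertex set V with edge set E ⊆ V × V, where each edge e carries an affine weight w_e(x) = a_e·x + b_e, and let α ≤ β be reals. Suppose that for every r with α ≤ r ≤ β, every cycle of G(r) has nonnegative weight. Then there exist reals c_v, d_v for each vertex v, defining affine functions g_v(x) = c_v·x + d_v, such that for every r with α ≤ r ≤ β and every edge (u,v) ∈ E, w_{(u,v)}(r) + g_u(r) − g_v(r) ≥ 0. -/
/-- `p` is a walk from `u` to `v` in the digraph with vertex set `V` and edge set `E`: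
a nonempty list of vertices starting at `u`, ending at `v`, with consecutive pairs in `E`. -/
def IsWalk {V : Type*} (E : Set (V × V)) (u v : V) (p : List V) : Prop :=
  List.Chain' (fun x y => (x, y) ∈ E) p ∧ p.head? = some u ∧ p.getLast? = some v

/-- The weight of a walk: the sum of the edge weights over consecutive pairs,
counted with multiplicity. -/
def walkWeight {V : Type*} (w : V × V → ℝ) (p : List V) : ℝ :=
  ((List.zip p p.tail).map w).sum

/-- Every cycle (closed walk with at least one edge) has nonnegative weight. -/
def NonnegCycles {V : Type*} (E : Set (V × V)) (w : V × V → ℝ) : Prop :=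
  ∀ (u : V) (p : List V), IsWalk E u u p → 2 ≤ p.length → 0 ≤ walkWeight w p

lemma walkWeight_cons_cons {V : Type*} (w : V × V → ℝ) (x y : V) (l : List V) :
    walkWeight w (x :: y :: l) = w (x, y) + walkWeight w (y :: l) := by
  simp [walkWeight]

lemma walkWeight_singleton {V : Type*} (w : V × V → ℝ) (x : V) :
    walkWeight w [x] = 0 := by
  simp [walkWeight]

open Classical in
noncomputable def bf {V : Type*} [Fintype V] [Nonempty V] (E : Set (V × V)) (w : V × V → ℝ) :
    ℕ → V → ℝ
  | 0 => fun _ => 0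
  | (k+1) => fun v =>
      Finset.univ.inf' Finset.univ_nonempty
        (fun u => if (u, v) ∈ E then min (bf E w k v) (bf E w k u + w (u, v)) else bf E w k v)

section BF
variable {V : Type*} [Fintype V] [Nonempty V] (E : Set (V × V)) (w : V × V → ℝ)

open Classical in
lemma bf_succ_le (k : ℕ) (v : V) : bf E w (k+1) v ≤ bf E w k v := by
  refine le_trans (Finset.inf'_le _ (Finset.mem_univ (Classical.arbitrary V))) ?_
  split_ifs
  · exact min_le_left _ _
  · exact le_refl _

lemma bf_anti (v : V) : Antitone (fun k => bf E w k v) :=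
  antitone_nat_of_succ_le (fun k => bf_succ_le E w k v)

open Classical in
lemma bf_succ_le_edge (k : ℕ) {u v : V} (h : (u, v) ∈ E) :
    bf E w (k+1) v ≤ bf E w k u + w (u, v) := by
  refine le_trans (Finset.inf'_le _ (Finset.mem_univ u)) ?_
  rw [if_pos h]
  exact min_le_right _ _

open Classical in
lemma bf_exists_of_lt {k : ℕ} {v : V} (h : bf E w (k+1) v < bf E w k v) :
    ∃ u, (u, v) ∈ E ∧ bf E w (k+1) v = bf E w k u + w (u, v) := by
  obtain ⟨u0, -, hu0⟩ := Finset.exists_mem_eq_inf' (Finset.univ_nonempty (α := V))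
    (fun u => if (u, v) ∈ E then min (bf E w k v) (bf E w k u + w (u, v)) else bf E w k v)
  have hval : bf E w (k+1) v =
      if (u0, v) ∈ E then min (bf E w k v) (bf E w k u0 + w (u0, v)) else bf E w k v := hu0
  by_cases he : (u0, v) ∈ E
  · rw [if_pos he] at hval
    rcases min_cases (bf E w k v) (bf E w k u0 + w (u0, v)) with ⟨h1, _⟩ | ⟨h1, _⟩
    · rw [hval, h1] at h; exact absurd h (lt_irrefl _)
    · exact ⟨u0, he, by rw [hval, h1]⟩
  · rw [if_neg he] at hval; rw [hval] at h; exact absurd h (lt_irrefl _)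

lemma bf_step {j : ℕ} {x : V} (h : bf E w (j+2) x < bf E w (j+1) x) :
    ∃ x', (x', x) ∈ E ∧ bf E w (j+2) x = bf E w (j+1) x' + w (x', x) ∧
      bf E w (j+1) x' < bf E w j x' := by
  obtain ⟨x', he, heq⟩ := bf_exists_of_lt E w h
  refine ⟨x', he, heq, ?_⟩
  by_contra hge
  have h1 : bf E w (j+1) x' = bf E w j x' :=
    le_antisymm (bf_succ_le E w j x') (not_lt.1 hge)
  have h2 := bf_succ_le_edge E w j he
  rw [h1] at heq
  linarith

lemma exists_chain {v : V} {n : ℕ} (hv : bf E w (n+1) v < bf E w n v) :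
    ∃ u : ℕ → V, u 0 = v ∧
      (∀ i ≤ n, bf E w (n - i + 1) (u i) < bf E w (n - i) (u i)) ∧
      (∀ i < n, (u (i+1), u i) ∈ E ∧
        bf E w (n - i + 1) (u i) = bf E w (n - i) (u (i+1)) + w (u (i+1), u i)) := by
  suffices h : ∀ m, ∃ u : ℕ → V, u 0 = v ∧
      (∀ i, i ≤ min m n → bf E w (n - i + 1) (u i) < bf E w (n - i) (u i)) ∧
      (∀ i, i < min m n → (u (i+1), u i) ∈ E ∧
        bf E w (n - i + 1) (u i) = bf E w (n - i) (u (i+1)) + w (u (i+1), u i)) by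
    obtain ⟨u, h0, h1, h2⟩ := h n
    exact ⟨u, h0, fun i hi => h1 i (by omega), fun i hi => h2 i (by omega)⟩
  intro m
  induction m with
  | zero =>
    refine ⟨fun _ => v, rfl, ?_, ?_⟩
    · intro i hi
      have hi0 : i = 0 := by omega
      subst hi0
      simpa using hv
    · intro i hi; omega
  | succ m ih =>
    obtain ⟨u, h0, h1, h2⟩ := ih
    by_cases hm : m < n
    · have hx : bf E w (n - m + 1) (u m) < bf E w (n - m) (u m) := h1 m (by omega)
      have hsub : n - m = (n - (m+1)) + 1 := by omega
      rw [hsub] at hx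
      obtain ⟨x', he, heq, hd⟩ := bf_step E w hx
      classical
      refine ⟨fun i => if i ≤ m then u i else x', by simp [h0], ?_, ?_⟩
      · intro i hi
        by_cases him : i ≤ m
        · simpa [him] using h1 i (by omega)
        · have hieq : i = m + 1 := by omega
          subst hieq
          simp [him]
          exact hd
      · intro i hi
        by_cases him : i < m
        · have h1' : i ≤ m := by omega
          have h2' : i + 1 ≤ m := by omega
          simpa [h1', h2'] using h2 i (by omega)
        · have hieq : i = m := by omega
          subst hieq
          have hnot : ¬ (i + 1 ≤ i) := by omega
          simp only [hnot, if_false, le_refl, if_true]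
          rw [hsub]
          exact ⟨he, heq⟩
    · refine ⟨u, h0, fun i hi => h1 i (by omega), fun i hi => h2 i (by omega)⟩

end BF

/-- list [u (i+m), u (i+m-1), ..., u i] -/
def cyc {V : Type*} (u : ℕ → V) (i : ℕ) : ℕ → List V
  | 0 => [u i]
  | (m+1) => u (i+m+1) :: cyc u i m

lemma cyc_head {V : Type*} (u : ℕ → V) (i m : ℕ) :
    (cyc u i m).head? = some (u (i + m)) := by
  cases m <;> rfl

lemma cyc_getLast {V : Type*} (u : ℕ → V) (i : ℕ) : ∀ m, (cyc u i m).getLast? = some (u i) := by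
  intro m
  induction m with
  | zero => rfl
  | succ m ih =>
    cases m with
    | zero => simp [cyc]
    | succ m' =>
      rw [show cyc u i (m'+1+1) = u (i+m'+1+1) :: u (i+m'+1) :: cyc u i m' from rfl,
        List.getLast?_cons_cons]
      exact ih

lemma cyc_length {V : Type*} (u : ℕ → V) (i : ℕ) : ∀ m, (cyc u i m).length = m + 1 := by
  intro m
  induction m with
  | zero => rfl
  | succ m ih => simp [cyc, ih]

lemma cyc_chain {V : Type*} (E : Set (V × V)) (u : ℕ → V) (i N : ℕ)
    (hedge : ∀ s < N, (u (s+1), u s) ∈ E) :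
    ∀ m, i + m ≤ N → List.Chain' (fun x y => (x, y) ∈ E) (cyc u i m) := by
  intro m
  induction m with
  | zero => intro _; exact List.isChain_singleton _
  | succ m ih =>
    intro hmn
    rw [List.Chain', show cyc u i (m+1) = u (i+m+1) :: cyc u i m from rfl, List.isChain_cons]
    refine ⟨?_, ih (by omega)⟩
    intro y hy
    rw [cyc_head] at hy
    obtain rfl : y = u (i + m) := by simpa using hy.symm
    exact hedge (i + m) (by omega)

section Potential
variable {V : Type*} [Fintype V]

lemma exists_potential (E : Set (V × V)) (w : V × V → ℝ) (hc : NonnegCycles E w) :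
    ∃ p : V → ℝ, ∀ u v : V, (u, v) ∈ E → 0 ≤ w (u, v) + p u - p v := by
  cases isEmpty_or_nonempty V with
  | inl h => exact ⟨fun _ => 0, fun u => (h.false u).elim⟩
  | inr h =>
    set n := Fintype.card V with hn
    have key : ∀ v, bf E w (n+1) v = bf E w n v := by
      intro v
      refine le_antisymm (bf_succ_le E w n v) (not_lt.1 ?_)
      intro hv
      obtain ⟨u, h0, h1, h2⟩ := exists_chain E w hv
      have hninj : ¬ Function.Injective (fun i : Fin (n+1) => u i) := by
        intro hinj
        have := Fintype.card_le_of_injective _ hinj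
        simp [hn] at this
      obtain ⟨i0, j0, hequ, hne⟩ := Function.not_injective_iff.1 hninj
      -- wlog i < j
      obtain ⟨i, j, hij, hji, huij⟩ :
          ∃ i j : ℕ, i < j ∧ j ≤ n ∧ u i = u j := by
        rcases lt_or_gt_of_ne (fun hh => hne (Fin.ext hh) : (i0 : ℕ) ≠ (j0 : ℕ)) with hlt | hgt
        · exact ⟨i0, j0, hlt, by omega, hequ⟩
        · exact ⟨j0, i0, hgt, by omega, hequ.symm⟩
      set m := j - i with hm
      have hiM : i + m = j := by omega
      -- weight formula
      have wfor : ∀ m', i + m' ≤ n → walkWeight w (cyc u i m')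
          = bf E w (n - i + 1) (u i) - bf E w (n - (i + m') + 1) (u (i + m')) := by
        intro m'
        induction m' with
        | zero => intro _; simp [cyc, walkWeight_singleton]
        | succ m' ih =>
          intro hm'
          have hrec := ih (by omega)
          have hcc : cyc u i (m'+1) = u (i+m'+1) :: u (i+m') :: (cyc u i m').tail := by
            cases m' <;> rfl
          have htail : u (i+m') :: (cyc u i m').tail = cyc u i m' := by
            cases m' <;> rfl
          rw [hcc, walkWeight_cons_cons, htail, hrec]
          obtain ⟨-, heq⟩ := h2 (i + m') (by omega)
          have e1 : n - (i + m') + 1 = (n - (i + (m'+1))) + 2 := by omega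
          have e2 : n - (i + m') = (n - (i + (m'+1))) + 1 := by omega
          have heq' : bf E w (n - (i+m') + 1) (u (i+m'))
              = bf E w (n - (i + (m'+1)) + 1) (u (i+m'+1)) + w (u (i+m'+1), u (i+m')) := by
            rw [← e2]; exact heq
          have : w (u (i+m'+1), u (i+m'))
              = bf E w (n - (i+m') + 1) (u (i+m')) - bf E w (n - (i + (m'+1)) + 1) (u (i+m'+1)) := by
            rw [heq']; ring
          rw [show i + m' + 1 = i + (m'+1) from rfl] at this ⊢
          rw [this]; ring
      have hw := wfor m (by omega)
      rw [hiM] at hw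
      -- the cycle is negative
      have hneg : walkWeight w (cyc u i m) < 0 := by
        have hA : bf E w (n - i + 1) (u i) < bf E w (n - i) (u i) := h1 i (by omega)
        have hB : bf E w (n - i) (u i) ≤ bf E w (n - j + 1) (u i) :=
          bf_anti E w (u i) (by omega : n - j + 1 ≤ n - i)
        rw [hw, huij]
        rw [huij] at hA hB
        linarith
      -- but hc says it is nonnegative
      have hwalk : IsWalk E (u j) (u j) (cyc u i m) := by
        refine ⟨cyc_chain E u i n (fun s hs => (h2 s hs).1) m (by omega), ?_, ?_⟩
        · rw [cyc_head, hiM]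
        · rw [cyc_getLast, huij]
      have hlen : 2 ≤ (cyc u i m).length := by
        rw [cyc_length]; omega
      have := hc (u j) (cyc u i m) hwalk hlen
      linarith
    refine ⟨bf E w n, fun x y hxy => ?_⟩
    have h1 : bf E w (n+1) y ≤ bf E w n x + w (x, y) := bf_succ_le_edge E w n hxy
    rw [key y] at h1
    linarith

end Potential

lemma affine_nonneg {A B α β r : ℝ} (hα : α ≤ r) (hβ : r ≤ β)
    (h1 : 0 ≤ A * α + B) (h2 : 0 ≤ A * β + B) : 0 ≤ A * r + B := by
  rcases le_or_gt 0 A with hA | hA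
  · nlinarith
  · nlinarith

/-- (Lemma 1.2 of the paper, both endpoints finite.) If for every
`r ∈ [α, β]` every cycle of `G(r)` has nonnegative weight, then there are affine vertex
functions `g_v(x) = c_v·x + d_v` such that for every `r ∈ [α, β]` and every edge `(u,v)`,
`w₍u,v₎(r) + g_u(r) − g_v(r) ≥ 0`. -/
theorem statement6 {V : Type*} [Fintype V] (E : Set (V × V)) (a b : V × V → ℝ)
    (α β : ℝ) (hαβ : α ≤ β)
    (hcyc : ∀ r : ℝ, α ≤ r → r ≤ β → NonnegCycles E (fun e => a e * r + b e)) :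
    ∃ c d : V → ℝ, ∀ r : ℝ, α ≤ r → r ≤ β → ∀ u v : V, (u, v) ∈ E →
      0 ≤ (a (u, v) * r + b (u, v)) + (c u * r + d u) - (c v * r + d v) := by
  obtain ⟨pa, hpa⟩ := exists_potential E (fun e => a e * α + b e) (hcyc α le_rfl hαβ)
  obtain ⟨pb, hpb⟩ := exists_potential E (fun e => a e * β + b e) (hcyc β hαβ le_rfl)
  by_cases hab : α = β
  · subst hab
    refine ⟨fun _ => 0, pa, ?_⟩
    intro r h1 h2 u v he
    obtain rfl : r = α := le_antisymm h2 h1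
    simpa using hpa u v he
  · have hlt : α < β := lt_of_le_of_ne hαβ hab
    set c : V → ℝ := fun x => (pb x - pa x) / (β - α) with hc
    set d : V → ℝ := fun x => pa x - c x * α with hd
    have hgα : ∀ x, c x * α + d x = pa x := by intro x; simp only [hd]; ring
    have hgβ : ∀ x, c x * β + d x = pb x := by
      intro x
      have hne : β - α ≠ 0 := by linarith
      simp only [hd, hc]
      field_simp
      ring
    refine ⟨c, d, ?_⟩
    intro r h1 h2 u v he
    have e1 : 0 ≤ (a (u,v) + c u - c v) * α + (b (u,v) + d u - d v) := by
      have hEq : (a (u,v) + c u - c v) * α + (b (u,v) + d u - d v)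
          = (a (u,v) * α + b (u,v)) + (c u * α + d u) - (c v * α + d v) := by ring
      rw [hEq, hgα u, hgα v]
      exact hpa u v he
    have e2 : 0 ≤ (a (u,v) + c u - c v) * β + (b (u,v) + d u - d v) := by
      have hEq : (a (u,v) + c u - c v) * β + (b (u,v) + d u - d v)
          = (a (u,v) * β + b (u,v)) + (c u * β + d u) - (c v * β + d v) := by ring
      rw [hEq, hgβ u, hgβ v]
      exact hpb u v he
    have := affine_nonneg h1 h2 e1 e2
    have hEq : (a (u,v) + c u - c v) * r + (b (u,v) + d u - d v)
        = (a (u,v) * r + b (u,v)) + (c u * r + d u) - (c v * r + d v) := by ring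
    linarith [hEq ▸ this]
end

section
/- Let d ≥ 1 and let f, g : ℝ → ℝ be piecewise polynomial functions: there are breakpoints b_1 < … < b_{t1} and polynomials p_0, …, p_{t1} of degree at most d such that f(x) = p_j(x) whenever x lies in the j-th interval determined by the breakpoints (with b_0 = −∞ and b_{t1+1} = +∞), and similarly g is given by breakpoints c_1 < … < c_{t2} and polynomials q_0, …, q_{t2} of degree at most d. Then the pointwise minimum min(f, g) admits such a piecewise polynomial representation with at most t1 + t2 + d·(t1 + t2 + 1) breakpoints, in which every piece is one of the polynomials p_j or q_j. -/
/-- `f` is represented piecewise by the strictly increasing breakpoints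
`b 0 < b 1 < … < b (t-1)` and the polynomials `p 0, …, p t`: on the `j`-th closed
interval determined by the breakpoints (with `b₋ = −∞` on the left and `b₊ = +∞`
on the right), `f` agrees with the polynomial `p j`. -/
def PiecewiseRep (f : ℝ → ℝ) {t : ℕ} (b : Fin t → ℝ)
    (p : Fin (t + 1) → Polynomial ℝ) : Prop :=
  StrictMono b ∧
    ∀ (j : Fin (t + 1)) (x : ℝ),
      (∀ i : Fin t, (i : ℕ) < (j : ℕ) → b i ≤ x) →
      (∀ i : Fin t, (j : ℕ) ≤ (i : ℕ) → x ≤ b i) →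
      f x = (p j).eval x

noncomputable def pieceIdx {n : ℕ} (b : Fin n → ℝ) (x : ℝ) : Fin (n + 1) :=
  ⟨(Finset.univ.filter (fun i => b i < x)).card,
   Nat.lt_succ_of_le (le_trans (Finset.card_filter_le _ _) (by simp))⟩

lemma lt_iff_lt_pieceIdx {n : ℕ} {b : Fin n → ℝ} (hb : StrictMono b) (x : ℝ) (i : Fin n) :
    b i < x ↔ (i : ℕ) < (pieceIdx b x : ℕ) := by
  classical
  constructor
  · intro h
    have hsub : Finset.Iic i ⊆ Finset.univ.filter (fun i => b i < x) := by
      intro i' hi'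
      simp only [Finset.mem_Iic] at hi'
      simp only [Finset.mem_filter, Finset.mem_univ, true_and]
      exact lt_of_le_of_lt (hb.monotone hi') h
    have := Finset.card_le_card hsub
    rw [Fin.card_Iic] at this
    simpa [pieceIdx] using this
  · intro h
    by_contra hlt
    push_neg at hlt
    have hsub : Finset.univ.filter (fun i' => b i' < x) ⊆ Finset.Iio i := by
      intro i' hi'
      simp only [Finset.mem_filter, Finset.mem_univ, true_and] at hi'
      simp only [Finset.mem_Iio]
      by_contra hge
      push_neg at hge
      exact absurd (lt_of_le_of_lt (hb.monotone hge) hi') (not_lt.2 hlt)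
    have := Finset.card_le_card hsub
    rw [Fin.card_Iio] at this
    simp only [pieceIdx] at h
    omega

lemma rep_eval {f : ℝ → ℝ} {n : ℕ} {b : Fin n → ℝ} {p : Fin (n + 1) → Polynomial ℝ}
    (hf : PiecewiseRep f b p) (w x : ℝ)
    (h1 : ∀ i, b i < w → b i ≤ x) (h2 : ∀ i, w ≤ b i → x ≤ b i) :
    f x = (p (pieceIdx b w)).eval x := by
  refine hf.2 _ x (fun i hi => h1 i ?_) (fun i hi => h2 i ?_)
  · exact (lt_iff_lt_pieceIdx hf.1 w i).2 hi
  · exact not_lt.1 (fun hlt => absurd ((lt_iff_lt_pieceIdx hf.1 w i).1 hlt) (by omega))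

lemma pieceIdx_congr {n : ℕ} (b : Fin n → ℝ) {x y : ℝ} (h : ∀ i, b i < x ↔ b i < y) :
    pieceIdx b x = pieceIdx b y := by
  classical
  simp only [pieceIdx, Fin.mk.injEq]
  congr 1
  exact Finset.filter_congr (fun i _ => by simpa using h i)

lemma filter_lt_eq_of_card_eq (T : Finset ℝ) {x y : ℝ}
    (h : (T.filter (· < x)).card = (T.filter (· < y)).card) :
    T.filter (· < x) = T.filter (· < y) := by
  classical
  rcases le_total x y with hxy | hxy
  · refine Finset.eq_of_subset_of_card_le ?_ h.ge
    intro a ha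
    simp only [Finset.mem_filter] at ha ⊢
    exact ⟨ha.1, lt_of_lt_of_le ha.2 hxy⟩
  · refine (Finset.eq_of_subset_of_card_le ?_ h.le).symm
    intro a ha
    simp only [Finset.mem_filter] at ha ⊢
    exact ⟨ha.1, lt_of_lt_of_le ha.2 hxy⟩

/-- (Claim 3.4(b).) If `f` and `g` are piecewise polynomial with
`t1` resp. `t2` breakpoints and pieces of degree at most `d` (`d ≥ 1`), then the
pointwise minimum `min(f, g)` is piecewise polynomial with at most
`t1 + t2 + d·(t1 + t2 + 1)` breakpoints, each piece being one of the original
polynomials. -/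
theorem statement11 (d t1 t2 : ℕ) (hd : 1 ≤ d) (f g : ℝ → ℝ)
    (bf : Fin t1 → ℝ) (pf : Fin (t1 + 1) → Polynomial ℝ)
    (bg : Fin t2 → ℝ) (pg : Fin (t2 + 1) → Polynomial ℝ)
    (hf : PiecewiseRep f bf pf) (hg : PiecewiseRep g bg pg)
    (hdf : ∀ j, (pf j).natDegree ≤ d) (hdg : ∀ j, (pg j).natDegree ≤ d) :
    ∃ (t : ℕ) (b : Fin t → ℝ) (p : Fin (t + 1) → Polynomial ℝ),
      t ≤ t1 + t2 + d * (t1 + t2 + 1) ∧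
      PiecewiseRep (fun x => min (f x) (g x)) b p ∧
      ∀ j : Fin (t + 1), (∃ i, p j = pf i) ∨ (∃ i, p j = pg i) := by
  classical
  set T0 : Finset ℝ := (Finset.univ.image bf) ∪ (Finset.univ.image bg) with hT0def
  have hT0f : ∀ i, bf i ∈ T0 := fun i =>
    Finset.mem_union_left _ (Finset.mem_image_of_mem bf (Finset.mem_univ i))
  have hT0g : ∀ i, bg i ∈ T0 := fun i =>
    Finset.mem_union_right _ (Finset.mem_image_of_mem bg (Finset.mem_univ i))
  have hT0card : T0.card ≤ t1 + t2 := by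
    refine le_trans (Finset.card_union_le _ _) (Nat.add_le_add ?_ ?_)
    · exact le_trans Finset.card_image_le (by simp)
    · exact le_trans Finset.card_image_le (by simp)
  let N : ℝ → ℕ := fun x => (T0.filter (· < x)).card
  have hNle : ∀ x, N x ≤ T0.card := fun x => Finset.card_filter_le _ _
  let xm : ℕ → ℝ := fun m => if h : ∃ x, N x = m then h.choose else 0
  have hxm : ∀ x : ℝ, N (xm (N x)) = N x := by
    intro x
    have h : ∃ y, N y = N x := ⟨x, rfl⟩
    simp only [xm, dif_pos h]
    exact h.choose_spec
  let P : ℝ → Polynomial ℝ := fun y => pf (pieceIdx bf y)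
  let Q : ℝ → Polynomial ℝ := fun y => pg (pieceIdx bg y)
  let A : ℕ → Finset ℝ := fun m =>
    if P (xm m) = Q (xm m) then ∅ else (P (xm m) - Q (xm m)).roots.toFinset
  have hA : ∀ m, (A m).card ≤ d := by
    intro m
    by_cases h : P (xm m) = Q (xm m)
    · simp [A, h]
    · have hAm : A m = (P (xm m) - Q (xm m)).roots.toFinset := by
        simp only [A, if_neg h]
      rw [hAm]
      calc ((P (xm m) - Q (xm m)).roots.toFinset).card
          ≤ Multiset.card (P (xm m) - Q (xm m)).roots := Multiset.toFinset_card_le _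
        _ ≤ (P (xm m) - Q (xm m)).natDegree := Polynomial.card_roots' _
        _ ≤ max (P (xm m)).natDegree (Q (xm m)).natDegree := Polynomial.natDegree_sub_le _ _
        _ ≤ d := max_le (hdf _) (hdg _)
  set S : Finset ℝ := T0 ∪ (Finset.range (T0.card + 1)).biUnion A with hSdef
  have hTS : T0 ⊆ S := Finset.subset_union_left
  have htcard : S.card ≤ t1 + t2 + d * (t1 + t2 + 1) := by
    have h1 : S.card ≤ T0.card + ((Finset.range (T0.card + 1)).biUnion A).card :=
      Finset.card_union_le _ _
    have h2 : ((Finset.range (T0.card + 1)).biUnion A).card ≤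
        ∑ m ∈ Finset.range (T0.card + 1), (A m).card := Finset.card_biUnion_le
    have h3 : ∑ m ∈ Finset.range (T0.card + 1), (A m).card ≤ (T0.card + 1) * d := by
      calc ∑ m ∈ Finset.range (T0.card + 1), (A m).card
          ≤ ∑ _m ∈ Finset.range (T0.card + 1), d := Finset.sum_le_sum (fun m _ => hA m)
        _ = (T0.card + 1) * d := by simp [Finset.sum_const, mul_comm]
    have h4 : (T0.card + 1) * d ≤ d * (t1 + t2 + 1) := by
      rw [mul_comm]
      exact Nat.mul_le_mul_left d (by omega)
    omega
  -- roots of active differences are breakpoints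
  have hroot : ∀ y : ℝ, P y ≠ Q y → (P y).eval y = (Q y).eval y → y ∈ S := by
    intro y hne heq
    have hm := hxm y
    have hfe : T0.filter (· < xm (N y)) = T0.filter (· < y) :=
      filter_lt_eq_of_card_eq T0 hm
    have hfilter : ∀ c ∈ T0, (c < xm (N y) ↔ c < y) := by
      intro c hc
      constructor
      · intro h
        have hmem : c ∈ T0.filter (· < y) := hfe ▸ Finset.mem_filter.2 ⟨hc, h⟩
        exact (Finset.mem_filter.1 hmem).2
      · intro h
        have hmem : c ∈ T0.filter (· < xm (N y)) := hfe ▸ Finset.mem_filter.2 ⟨hc, h⟩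
        exact (Finset.mem_filter.1 hmem).2
    have hP : P (xm (N y)) = P y :=
      congrArg pf (pieceIdx_congr bf (fun i => hfilter (bf i) (hT0f i)))
    have hQ : Q (xm (N y)) = Q y :=
      congrArg pg (pieceIdx_congr bg (fun i => hfilter (bg i) (hT0g i)))
    have hAy : y ∈ A (N y) := by
      have hcond : ¬ P (xm (N y)) = Q (xm (N y)) := by rw [hP, hQ]; exact hne
      have : A (N y) = (P (xm (N y)) - Q (xm (N y))).roots.toFinset := by
        simp only [A]; rw [if_neg hcond]
      rw [this, hP, hQ, Multiset.mem_toFinset,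
        Polynomial.mem_roots (sub_ne_zero.2 hne)]
      simp [Polynomial.IsRoot, sub_eq_zero, heq]
    exact Finset.mem_union_right _
      (Finset.mem_biUnion.2 ⟨N y, Finset.mem_range.2 (Nat.lt_succ_of_le (hNle y)), hAy⟩)
  set t := S.card with ht
  let e := S.orderIsoOfFin ht.symm
  let b : Fin t → ℝ := fun i => (e i : ℝ)
  have hb : StrictMono b := fun i j hij => Subtype.coe_lt_coe.2 (e.strictMono hij)
  have hbS : ∀ i, b i ∈ S := fun i => (e i).2
  have hSb : ∀ y, y ∈ S → ∃ i, b i = y := fun y hy =>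
    ⟨e.symm ⟨y, hy⟩, congrArg Subtype.val (e.apply_symm_apply ⟨y, hy⟩)⟩
  let w : Fin (t + 1) → ℝ := fun j =>
    if h0 : t = 0 then 0
    else if h1 : (j : ℕ) = 0 then b ⟨0, Nat.pos_of_ne_zero h0⟩ - 1
    else if h2 : (j : ℕ) = t then b ⟨t - 1, by omega⟩ + 1
    else (b ⟨(j : ℕ) - 1, by omega⟩ + b ⟨(j : ℕ), by
      have := j.isLt; omega⟩) / 2
  have hw : ∀ (j : Fin (t + 1)) (i : Fin t),
      ((i : ℕ) < (j : ℕ) → b i < w j) ∧ ((j : ℕ) ≤ (i : ℕ) → w j < b i) := by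
    intro j i
    have hit := i.isLt
    have hjt := j.isLt
    have h0 : t ≠ 0 := by omega
    by_cases h1 : (j : ℕ) = 0
    · have hwj : w j = b ⟨0, Nat.pos_of_ne_zero h0⟩ - 1 := by
        simp only [w, dif_neg h0, dif_pos h1]
      constructor
      · intro h; omega
      · intro _
        have : b ⟨0, Nat.pos_of_ne_zero h0⟩ ≤ b i := hb.monotone (by simp [Fin.le_def])
        rw [hwj]; linarith
    · by_cases h2 : (j : ℕ) = t
      · have hwj : w j = b ⟨t - 1, by omega⟩ + 1 := by
          simp only [w, dif_neg h0, dif_neg h1, dif_pos h2]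
        constructor
        · intro _
          have : b i ≤ b ⟨t - 1, by omega⟩ := hb.monotone (by simp [Fin.le_def]; omega)
          rw [hwj]; linarith
        · intro h; omega
      · have hwj : w j = (b ⟨(j : ℕ) - 1, by omega⟩ + b ⟨(j : ℕ), by omega⟩) / 2 := by
          simp only [w, dif_neg h0, dif_neg h1, dif_neg h2]
        have hlt : b ⟨(j : ℕ) - 1, by omega⟩ < b ⟨(j : ℕ), by omega⟩ :=
          hb (Fin.mk_lt_mk.2 (by omega))
        constructor
        · intro h
          have : b i ≤ b ⟨(j : ℕ) - 1, by omega⟩ := hb.monotone (by simp [Fin.le_def]; omega)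
          rw [hwj]; linarith
        · intro h
          have : b ⟨(j : ℕ), by omega⟩ ≤ b i := hb.monotone (by simp [Fin.le_def]; omega)
          rw [hwj]; linarith
  -- nothing of S lies strictly inside an interval
  have hint : ∀ (j : Fin (t + 1)) (y : ℝ),
      (∀ i : Fin t, (i : ℕ) < (j : ℕ) → b i < y) →
      (∀ i : Fin t, (j : ℕ) ≤ (i : ℕ) → y < b i) → y ∉ S := by
    intro j y hy1 hy2 hy
    obtain ⟨i, rfl⟩ := hSb y hy
    rcases lt_or_ge (i : ℕ) (j : ℕ) with h | h
    · exact lt_irrefl _ (hy1 i h)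
    · exact lt_irrefl _ (hy2 i h)
  -- interior points of the same interval see the same breakpoints
  have hloc : ∀ (j : Fin (t + 1)) (y y' : ℝ),
      (∀ i : Fin t, (i : ℕ) < (j : ℕ) → b i < y) →
      (∀ i : Fin t, (j : ℕ) ≤ (i : ℕ) → y < b i) →
      (∀ i : Fin t, (i : ℕ) < (j : ℕ) → b i < y') →
      (∀ i : Fin t, (j : ℕ) ≤ (i : ℕ) → y' < b i) →
      ∀ c ∈ S, (c < y ↔ c < y') := by
    intro j y y' hy1 hy2 hy1' hy2' c hc
    obtain ⟨i, rfl⟩ := hSb c hc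
    constructor
    · intro h
      rcases lt_or_ge (i : ℕ) (j : ℕ) with hij | hij
      · exact hy1' i hij
      · exact absurd h (not_lt.2 (hy2 i hij).le)
    · intro h
      rcases lt_or_ge (i : ℕ) (j : ℕ) with hij | hij
      · exact hy1 i hij
      · exact absurd h (not_lt.2 (hy2' i hij).le)
  have keyP : ∀ (j : Fin (t + 1)) (y : ℝ),
      (∀ i : Fin t, (i : ℕ) < (j : ℕ) → b i < y) →
      (∀ i : Fin t, (j : ℕ) ≤ (i : ℕ) → y < b i) →
      P y = P (w j) ∧ Q y = Q (w j) := by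
    intro j y hy1 hy2
    have hc : ∀ c ∈ S, (c < y ↔ c < w j) :=
      hloc j y (w j) hy1 hy2 (fun i hi => (hw j i).1 hi) (fun i hi => (hw j i).2 hi)
    constructor
    · exact congrArg pf (pieceIdx_congr bf (fun i => hc (bf i) (hTS (hT0f i))))
    · exact congrArg pg (pieceIdx_congr bg (fun i => hc (bg i) (hTS (hT0g i))))
  have keyroot : ∀ (j : Fin (t + 1)), P (w j) ≠ Q (w j) → ∀ y : ℝ,
      (∀ i : Fin t, (i : ℕ) < (j : ℕ) → b i < y) →
      (∀ i : Fin t, (j : ℕ) ≤ (i : ℕ) → y < b i) →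
      (P (w j)).eval y ≠ (Q (w j)).eval y := by
    intro j hne y hy1 hy2 heq
    obtain ⟨hPy, hQy⟩ := keyP j y hy1 hy2
    have hyS : y ∈ S := hroot y (by rw [hPy, hQy]; exact hne) (by rw [hPy, hQy]; exact heq)
    exact hint j y hy1 hy2 hyS
  let p : Fin (t + 1) → Polynomial ℝ := fun j =>
    if f (w j) ≤ g (w j) then P (w j) else Q (w j)
  refine ⟨t, b, p, htcard, ⟨hb, ?_⟩, fun j => ?_⟩
  swap
  · by_cases h : f (w j) ≤ g (w j)
    · exact Or.inl ⟨pieceIdx bf (w j), by simp only [p, P, if_pos h]⟩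
    · exact Or.inr ⟨pieceIdx bg (w j), by simp only [p, Q, if_neg h]⟩
  intro j x hx1 hx2
  have hwx1 : ∀ i, bf i < w j → bf i ≤ x := by
    intro i hi
    obtain ⟨i0, hi0⟩ := hSb (bf i) (hTS (hT0f i))
    rw [← hi0] at hi ⊢
    rcases lt_or_ge (i0 : ℕ) (j : ℕ) with h | h
    · exact hx1 i0 h
    · exact absurd hi (not_lt.2 ((hw j i0).2 h).le)
  have hwx2 : ∀ i, w j ≤ bf i → x ≤ bf i := by
    intro i hi
    obtain ⟨i0, hi0⟩ := hSb (bf i) (hTS (hT0f i))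
    rw [← hi0] at hi ⊢
    rcases lt_or_ge (i0 : ℕ) (j : ℕ) with h | h
    · exact absurd ((hw j i0).1 h) (not_lt.2 hi)
    · exact hx2 i0 h
  have hgx1 : ∀ i, bg i < w j → bg i ≤ x := by
    intro i hi
    obtain ⟨i0, hi0⟩ := hSb (bg i) (hTS (hT0g i))
    rw [← hi0] at hi ⊢
    rcases lt_or_ge (i0 : ℕ) (j : ℕ) with h | h
    · exact hx1 i0 h
    · exact absurd hi (not_lt.2 ((hw j i0).2 h).le)
  have hgx2 : ∀ i, w j ≤ bg i → x ≤ bg i := by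
    intro i hi
    obtain ⟨i0, hi0⟩ := hSb (bg i) (hTS (hT0g i))
    rw [← hi0] at hi ⊢
    rcases lt_or_ge (i0 : ℕ) (j : ℕ) with h | h
    · exact absurd ((hw j i0).1 h) (not_lt.2 hi)
    · exact hx2 i0 h
  have hfx : f x = (P (w j)).eval x := rep_eval hf (w j) x hwx1 hwx2
  have hgx : g x = (Q (w j)).eval x := rep_eval hg (w j) x hgx1 hgx2
  have hfw : f (w j) = (P (w j)).eval (w j) :=
    rep_eval hf (w j) (w j) (fun i h => h.le) (fun i h => h)
  have hgw : g (w j) = (Q (w j)).eval (w j) :=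
    rep_eval hg (w j) (w j) (fun i h => h.le) (fun i h => h)
  show min (f x) (g x) = (p j).eval x
  by_cases hPQe : P (w j) = Q (w j)
  · have hpj : (p j).eval x = (P (w j)).eval x := by
      by_cases h : f (w j) ≤ g (w j) <;> simp only [p, if_pos, if_neg, h, ← hPQe] <;> simp [h]
    rw [hfx, hgx, ← hPQe, min_self, hpj]
  · set φ : ℝ → ℝ := fun y => (P (w j)).eval y - (Q (w j)).eval y with hφ
    have hφc : Continuous φ := (Polynomial.continuous _).sub (Polynomial.continuous _)
    have hroot_int : ∀ y : ℝ, φ y = 0 →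
        (∀ i : Fin t, (i : ℕ) < (j : ℕ) → b i < y) →
        (∀ i : Fin t, (j : ℕ) ≤ (i : ℕ) → y < b i) → False := by
      intro y h0 hy1 hy2
      exact keyroot j hPQe y hy1 hy2 (sub_eq_zero.1 h0)
    have hwne : φ (w j) ≠ 0 := fun h =>
      hroot_int (w j) h (fun i hi => (hw j i).1 hi) (fun i hi => (hw j i).2 hi)
    have hkey1 : φ (w j) < 0 → φ x ≤ 0 := by
      intro hneg
      by_contra hpos
      push_neg at hpos
      rcases lt_trichotomy (w j) x with hlt | heq | hgt
      · obtain ⟨y, hy, hy0⟩ := intermediate_value_Ioo hlt.le hφc.continuousOn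
          (Set.mem_Ioo.2 ⟨hneg, hpos⟩)
        exact hroot_int y hy0
          (fun i h => lt_trans ((hw j i).1 h) hy.1)
          (fun i h => lt_of_lt_of_le hy.2 (hx2 i h))
      · rw [heq] at hneg; linarith
      · obtain ⟨y, hy, hy0⟩ := intermediate_value_Ioo' hgt.le hφc.continuousOn
          (Set.mem_Ioo.2 ⟨hneg, hpos⟩)
        exact hroot_int y hy0
          (fun i h => lt_of_le_of_lt (hx1 i h) hy.1)
          (fun i h => lt_trans hy.2 ((hw j i).2 h))
    have hkey2 : 0 < φ (w j) → 0 ≤ φ x := by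
      intro hposw
      by_contra hneg
      push_neg at hneg
      rcases lt_trichotomy (w j) x with hlt | heq | hgt
      · obtain ⟨y, hy, hy0⟩ := intermediate_value_Ioo' hlt.le hφc.continuousOn
          (Set.mem_Ioo.2 ⟨hneg, hposw⟩)
        exact hroot_int y hy0
          (fun i h => lt_trans ((hw j i).1 h) hy.1)
          (fun i h => lt_of_lt_of_le hy.2 (hx2 i h))
      · rw [heq] at hposw; linarith
      · obtain ⟨y, hy, hy0⟩ := intermediate_value_Ioo hgt.le hφc.continuousOn
          (Set.mem_Ioo.2 ⟨hneg, hposw⟩)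
        exact hroot_int y hy0
          (fun i h => lt_of_le_of_lt (hx1 i h) hy.1)
          (fun i h => lt_trans hy.2 ((hw j i).2 h))
    by_cases hle : f (w j) ≤ g (w j)
    · have hpj : p j = P (w j) := if_pos hle
      have hneg : φ (w j) < 0 := by
        refine lt_of_le_of_ne ?_ hwne
        have : f (w j) - g (w j) ≤ 0 := by linarith
        rw [hφ]; simp only
        rw [← hfw, ← hgw]; exact this
      have hx0 : φ x ≤ 0 := hkey1 hneg
      rw [hfx, hgx, hpj]
      exact min_eq_left (by simpa [hφ, sub_nonpos] using hx0)
    · have hpj : p j = Q (w j) := if_neg hle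
      have hposw : 0 < φ (w j) := by
        push_neg at hle
        rcases lt_or_ge 0 (φ (w j)) with h | h
        · exact h
        · exfalso
          have : f (w j) - g (w j) > 0 := by linarith
          rw [hφ] at h; simp only at h
          rw [← hfw, ← hgw] at h; linarith
      have hx0 : 0 ≤ φ x := hkey2 hposw
      rw [hfx, hgx, hpj]
      exact min_eq_right (by simpa [hφ, sub_nonneg] using hx0)
end
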